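/- Let w₁, w₂ be nonzero reals with |w₁| > |w₂| and let J > 0. Suppose μ* is a Borel probability measure on ℝ with ∫ x² dμ*(x) ≤ J such that R_s(μ*) ≥ R_s(μ) for every Borel probability measure μ on ℝ with ∫ x² dμ(x) ≤ J. Then μ*((−∞,0]) > 0 and μ*([0,∞)) > 0, i.e. the support of μ* is contained neither in (0,∞) nor in (−∞,0). (Theorem 2, case |w₁| > |w₂|.) -/

import Mathlib

open MeasureTheory Real Filter

/-- The standard Gaussian tail function `Q(x) = ∫_x^∞ (2π)^{-1/2} e^{-u²/2} du`. -/
noncomputable def gaussQ (x : ℝ) : ℝ :=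
  ∫ u in Set.Ioi x, (Real.sqrt (2 * Real.pi))⁻¹ * Real.exp (-u ^ 2 / 2)

noncomputable def gd (u : ℝ) : ℝ := (Real.sqrt (2 * Real.pi))⁻¹ * Real.exp (-u ^ 2 / 2)

lemma gd_pos (u : ℝ) : 0 < gd u := by
  apply mul_pos (inv_pos.2 (Real.sqrt_pos.2 (by positivity))) (Real.exp_pos _)

lemma gd_cont : Continuous gd := by
  unfold gd; fun_prop

lemma gd_integrable : Integrable gd := by
  have : Integrable (fun u : ℝ => Real.exp (-(1/2) * u ^ 2)) := integrable_exp_neg_mul_sq (by norm_num)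
  have h2 := this.const_mul (Real.sqrt (2 * Real.pi))⁻¹
  refine h2.congr (Eventually.of_forall fun u => ?_)
  unfold gd; ring_nf

lemma gd_integral : ∫ u, gd u = 1 := by
  unfold gd
  rw [integral_const_mul]
  have : (fun u : ℝ => Real.exp (-u ^ 2 / 2)) = fun u : ℝ => Real.exp (-(1/2) * u ^ 2) := by
    funext u; ring_nf
  rw [this, integral_gaussian]
  rw [show π / (1/2) = 2 * π by ring]
  rw [inv_mul_cancel₀ (by positivity)]

lemma gd_even (u : ℝ) : gd (-u) = gd u := by unfold gd; ring_nf

lemma gaussQ_eq (x : ℝ) : gaussQ x = ∫ u in Set.Ioi x, gd u := rfl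

lemma gaussQ_anti : Antitone gaussQ := by
  intro x y hxy
  rw [gaussQ_eq, gaussQ_eq]
  refine setIntegral_mono_set gd_integrable.integrableOn
    (Eventually.of_forall fun u => (gd_pos u).le)
    (Eventually.of_forall fun u hu => lt_of_le_of_lt hxy hu)

lemma gaussQ_measurable : Measurable gaussQ := gaussQ_anti.measurable

lemma gaussQ_strict_anti : StrictAnti gaussQ := by
  intro x y hxy
  rw [gaussQ_eq, gaussQ_eq]
  have hsplit : Set.Ioi x = Set.Ioc x y ∪ Set.Ioi y := (Set.Ioc_union_Ioi_eq_Ioi hxy.le).symm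
  rw [hsplit, setIntegral_union Set.Ioc_disjoint_Ioi_same
    measurableSet_Ioi gd_integrable.integrableOn gd_integrable.integrableOn]
  have hpos : 0 < ∫ u in Set.Ioc x y, gd u := by
    rw [← intervalIntegral.integral_of_le hxy.le]
    exact intervalIntegral.intervalIntegral_pos_of_pos_on
      (gd_integrable.intervalIntegrable) (fun u _ => gd_pos u) hxy
  linarith

lemma gaussQ_pos (x : ℝ) : 0 < gaussQ x := by
  rw [gaussQ_eq]
  rw [setIntegral_pos_iff_support_of_nonneg_ae (Eventually.of_forall fun u => (gd_pos u).le)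
    gd_integrable.integrableOn]
  have : Function.support gd = Set.univ := by
    ext u; simp [Function.support, (gd_pos u).ne']
  rw [this, Set.univ_inter]
  exact Measure.measure_Ioi_pos (volume : Measure ℝ) x

lemma gaussQ_add_neg (x : ℝ) : gaussQ x + gaussQ (-x) = 1 := by
  have h1 : gaussQ (-x) = ∫ u in Set.Iic x, gd u := by
    rw [gaussQ_eq]
    have := integral_comp_neg_Iic x gd
    simp only [gd_even] at this
    rw [← this]
  rw [gaussQ_eq, h1, ← gd_integral,
    ← integral_add_compl measurableSet_Iic gd_integrable, Set.compl_Iic]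
  ring

lemma gaussQ_lt_one (x : ℝ) : gaussQ x < 1 := by
  have := gaussQ_add_neg x
  have := gaussQ_pos (-x)
  linarith

lemma gaussQ_zero : gaussQ 0 = 1/2 := by
  have := gaussQ_add_neg 0
  simp at this
  linarith

/-- `η(t) = -t log t` (with `η(0) = 0`, automatic since `Real.log 0 = 0`). -/
noncomputable def eta (t : ℝ) : ℝ := -t * Real.log t

/-- The binary entropy function `h(p) = -p log p - (1-p) log (1-p)`. -/
noncomputable def binEnt (p : ℝ) : ℝ := eta p + eta (1 - p)

lemma eta_continuous : Continuous eta := by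
  have := Real.continuous_mul_log.neg
  refine this.congr fun t => ?_
  unfold eta; simp only [Pi.neg_apply]; ring

lemma binEnt_continuous : Continuous binEnt :=
  eta_continuous.add (eta_continuous.comp (continuous_const.sub continuous_id))

lemma binEnt_one_sub (p : ℝ) : binEnt (1 - p) = binEnt p := by
  unfold binEnt; rw [sub_sub_cancel]; ring

lemma eta_nonneg {t : ℝ} (h0 : 0 ≤ t) (h1 : t ≤ 1) : 0 ≤ eta t := by
  unfold eta
  rcases eq_or_lt_of_le h0 with h | h
  · simp [← h]
  · have : Real.log t ≤ 0 := Real.log_nonpos h0 h1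
    nlinarith

lemma eta_le {t : ℝ} (h0 : 0 ≤ t) : eta t ≤ 1 - t := by
  unfold eta
  rcases eq_or_lt_of_le h0 with h | h
  · simp [← h]
  · have := Real.log_le_sub_one_of_pos (inv_pos.2 h)
    rw [Real.log_inv] at this
    have h2 : -Real.log t ≤ t⁻¹ - 1 := this
    calc -t * Real.log t = t * (-Real.log t) := by ring
    _ ≤ t * (t⁻¹ - 1) := by nlinarith
    _ = 1 - t := by field_simp

lemma binEnt_nonneg {p : ℝ} (h0 : 0 ≤ p) (h1 : p ≤ 1) : 0 ≤ binEnt p :=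
  add_nonneg (eta_nonneg h0 h1) (eta_nonneg (by linarith) (by linarith))

lemma binEnt_le_one {p : ℝ} (h0 : 0 ≤ p) (h1 : p ≤ 1) : binEnt p ≤ 1 := by
  have := eta_le h0
  have := eta_le (t := 1 - p) (by linarith)
  unfold binEnt; linarith

lemma binEnt_strictMonoOn {a b : ℝ} (ha : 0 < a) (hab : a < b) (hb : b ≤ 1/2) :
    binEnt a < binEnt b := by
  have key : StrictMonoOn binEnt (Set.Icc a b) := by
    apply strictMonoOn_of_deriv_pos (convex_Icc a b) binEnt_continuous.continuousOn
    intro p hp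
    rw [interior_Icc] at hp
    obtain ⟨hp1, hp2⟩ := hp
    have hp0 : 0 < p := lt_trans ha hp1
    have hp1' : p < 1/2 := lt_of_lt_of_le hp2 hb
    have hd : HasDerivAt binEnt (Real.log (1 - p) - Real.log p) p := by
      have h1 : HasDerivAt (fun t : ℝ => t * Real.log t) (Real.log p + 1) p :=
        Real.hasDerivAt_mul_log hp0.ne'
      have h2 : HasDerivAt (fun t : ℝ => t * Real.log t) (Real.log (1 - p) + 1) (1 - p) :=
        Real.hasDerivAt_mul_log (by linarith)
      have h3 : HasDerivAt (fun t : ℝ => (1 - t : ℝ)) (-1) p := by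
        simpa using (hasDerivAt_id p).const_sub 1
      have h4 := (h2.comp p h3)
      have h5 : HasDerivAt (fun t : ℝ => (1 - t) * Real.log (1 - t))
          (-(Real.log (1 - p) + 1)) p := by
        exact h4.congr_deriv (by ring)
      have := (h1.neg).add h5.neg
      have heq : (fun t : ℝ => -(t * Real.log t) + -((1 - t) * Real.log (1 - t))) = binEnt := by
        funext t; unfold binEnt eta; ring
      rw [show ((-fun t : ℝ => t * Real.log t) + -fun t : ℝ => (1 - t) * Real.log (1 - t)) = binEnt from by rw [← heq]; rfl] at this
      exact this.congr_deriv (by ring)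
    rw [hd.deriv]
    have : Real.log p < Real.log (1 - p) := Real.log_lt_log hp0 (by linarith)
    linarith
  exact key (Set.left_mem_Icc.2 hab.le) (Set.right_mem_Icc.2 hab.le) hab

/-- `I(μ, w) = h(∫ Q(w·x) dμ) - ∫ h(Q(w·x)) dμ`, the mutual information of the real
Gaussian channel `Y = sgn(w·X + N)`, `N ~ N(0,1)`, with a one-bit ADC and input `X ~ μ`. -/
noncomputable def miMeas (μ : Measure ℝ) (w : ℝ) : ℝ :=
  binEnt (∫ x, gaussQ (w * x) ∂μ) - ∫ x, binEnt (gaussQ (w * x)) ∂μ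

/-- The Wyner secrecy rate `R_s(μ) = I(μ, w₁) - I(μ, w₂)`. -/
noncomputable def wynerRs (w₁ w₂ : ℝ) (μ : Measure ℝ) : ℝ := miMeas μ w₁ - miMeas μ w₂

lemma measQ (w : ℝ) : Measurable (fun x : ℝ => gaussQ (w * x)) :=
  gaussQ_measurable.comp (measurable_const.mul measurable_id)

lemma intQ (μ : Measure ℝ) [IsFiniteMeasure μ] (w : ℝ) :
    Integrable (fun x : ℝ => gaussQ (w * x)) μ := by
  refine Integrable.mono' (integrable_const 1) (measQ w).aestronglyMeasurable
    (Eventually.of_forall fun x => ?_)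
  rw [Real.norm_eq_abs, abs_of_pos (gaussQ_pos _)]
  exact (gaussQ_lt_one _).le

lemma int_binEntQ (μ : Measure ℝ) [IsFiniteMeasure μ] (w : ℝ) :
    Integrable (fun x : ℝ => binEnt (gaussQ (w * x))) μ := by
  refine Integrable.mono' (integrable_const 1)
    (binEnt_continuous.measurable.comp (measQ w)).aestronglyMeasurable
    (Eventually.of_forall fun x => ?_)
  rw [Real.norm_eq_abs, abs_of_nonneg (binEnt_nonneg (gaussQ_pos _).le (gaussQ_lt_one _).le)]
  exact binEnt_le_one (gaussQ_pos _).le (gaussQ_lt_one _).le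

lemma gaussQ_neg (x : ℝ) : gaussQ (-x) = 1 - gaussQ x := by
  have := gaussQ_add_neg x; linarith

lemma miMeas_neg (μ : Measure ℝ) [IsProbabilityMeasure μ] (w : ℝ) :
    miMeas μ (-w) = miMeas μ w := by
  unfold miMeas
  have h1 : (fun x : ℝ => gaussQ (-w * x)) = fun x : ℝ => 1 - gaussQ (w * x) := by
    funext x; rw [show -w * x = -(w * x) by ring, gaussQ_neg]
  have h2 : ∫ x, gaussQ (-w * x) ∂μ = 1 - ∫ x, gaussQ (w * x) ∂μ := by
    rw [h1, integral_sub (integrable_const 1) (intQ μ w)]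
    simp
  have h3 : ∫ x, binEnt (gaussQ (-w * x)) ∂μ = ∫ x, binEnt (gaussQ (w * x)) ∂μ := by
    apply integral_congr_ae (Eventually.of_forall fun x => ?_)
    rw [show -w * x = -(w * x) by ring, gaussQ_neg, binEnt_one_sub]
  rw [h2, h3, binEnt_one_sub]

lemma miMeas_abs (μ : Measure ℝ) [IsProbabilityMeasure μ] (w : ℝ) :
    miMeas μ |w| = miMeas μ w := by
  rcases abs_choice w with h | h
  · rw [h]
  · rw [h, miMeas_neg]

noncomputable def symMeas (μ : Measure ℝ) : Measure ℝ :=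
  (1/2 : ENNReal) • μ + (1/2 : ENNReal) • Measure.map Neg.neg μ

instance symMeas_prob (μ : Measure ℝ) [IsProbabilityMeasure μ] :
    IsProbabilityMeasure (symMeas μ) := by
  have : IsProbabilityMeasure (Measure.map Neg.neg μ) :=
    Measure.isProbabilityMeasure_map measurable_neg.aemeasurable
  constructor
  unfold symMeas
  simp [measure_univ]
  rw [← ENNReal.add_halves 1]
  norm_num

lemma integral_symMeas (μ : Measure ℝ) [IsProbabilityMeasure μ] (f : ℝ → ℝ)
    (hf : Measurable f) (hi : Integrable f μ) (hi' : Integrable (fun x => f (-x)) μ) :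
    ∫ x, f x ∂(symMeas μ) = (1/2) * ∫ x, f x ∂μ + (1/2) * ∫ x, f (-x) ∂μ := by
  have hsm : AEStronglyMeasurable f (Measure.map Neg.neg μ) := hf.aestronglyMeasurable
  have hmap : ∫ x, f x ∂(Measure.map Neg.neg μ) = ∫ x, f (-x) ∂μ :=
    integral_map measurable_neg.aemeasurable hsm
  have hintmap : Integrable f (Measure.map Neg.neg μ) :=
    (integrable_map_measure hsm measurable_neg.aemeasurable).2 (by simpa [Function.comp_def] using hi')
  unfold symMeas
  rw [integral_add_measure (hi.smul_measure (by norm_num)) (hintmap.smul_measure (by norm_num)),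
    integral_smul_measure, integral_smul_measure, hmap]
  norm_num

lemma neg_arg_eq (w : ℝ) : (fun x : ℝ => gaussQ (w * -x)) = fun x : ℝ => gaussQ (-w * x) := by
  funext x; congr 1; ring

lemma symMeas_intQ (μ : Measure ℝ) [IsProbabilityMeasure μ] (w : ℝ) :
    ∫ x, gaussQ (w * x) ∂(symMeas μ) = 1/2 := by
  rw [integral_symMeas μ (fun x => gaussQ (w * x)) (measQ w) (intQ μ w)
    (by rw [neg_arg_eq]; exact intQ μ (-w))]
  have : ∫ x, gaussQ (w * (-x)) ∂μ = ∫ x, (1 - gaussQ (w * x)) ∂μ := by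
    apply integral_congr_ae (Eventually.of_forall fun x => ?_)
    rw [show w * (-x) = -(w*x) by ring, gaussQ_neg]
  rw [this, integral_sub (integrable_const 1) (intQ μ w)]
  simp
  ring

lemma symMeas_intBin (μ : Measure ℝ) [IsProbabilityMeasure μ] (w : ℝ) :
    ∫ x, binEnt (gaussQ (w * x)) ∂(symMeas μ) = ∫ x, binEnt (gaussQ (w * x)) ∂μ := by
  rw [integral_symMeas μ (fun x => binEnt (gaussQ (w * x)))
    (binEnt_continuous.measurable.comp (measQ w)) (int_binEntQ μ w)
    (by have : (fun x : ℝ => binEnt (gaussQ (w * -x))) = fun x : ℝ => binEnt (gaussQ (-w * x)) := by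
          funext x; congr 2; ring
        rw [this]; exact int_binEntQ μ (-w))]
  have : ∫ x, binEnt (gaussQ (w * (-x))) ∂μ = ∫ x, binEnt (gaussQ (w * x)) ∂μ := by
    apply integral_congr_ae (Eventually.of_forall fun x => ?_)
    rw [show w * (-x) = -(w*x) by ring, gaussQ_neg, binEnt_one_sub]
  rw [this]
  ring

lemma miMeas_symMeas (μ : Measure ℝ) [IsProbabilityMeasure μ] (w : ℝ) :
    miMeas (symMeas μ) w = binEnt (1/2) - ∫ x, binEnt (gaussQ (w * x)) ∂μ := by
  unfold miMeas
  rw [symMeas_intQ, symMeas_intBin]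

lemma symMeas_pow (μ : Measure ℝ) [IsProbabilityMeasure μ]
    (hint : Integrable (fun x : ℝ => x ^ 2) μ) :
    (∫ x, x ^ 2 ∂(symMeas μ)) = ∫ x, x ^ 2 ∂μ := by
  rw [integral_symMeas μ (fun x => x ^ 2) (measurable_id.pow_const 2) hint
    (by simpa using hint)]
  simp
  ring

lemma symMeas_int_pow (μ : Measure ℝ) [IsProbabilityMeasure μ]
    (hint : Integrable (fun x : ℝ => x ^ 2) μ) :
    Integrable (fun x : ℝ => x ^ 2) (symMeas μ) := by
  unfold symMeas
  refine Integrable.add_measure (hint.smul_measure (by norm_num))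
    (Integrable.smul_measure ?_ (by norm_num))
  refine (integrable_map_measure (measurable_id.pow_const 2).aestronglyMeasurable
    measurable_neg.aemeasurable).2 ?_
  refine hint.congr (Eventually.of_forall fun x => ?_)
  simp [Function.comp]

lemma ae_pos_of_Iic_zero (μ : Measure ℝ) (hzero : μ (Set.Iic 0) = 0) :
    ∀ᵐ x ∂μ, (0:ℝ) < x := by
  rw [ae_iff]
  have : {x : ℝ | ¬ (0:ℝ) < x} = Set.Iic 0 := by ext x; simp [not_lt]
  rw [this]; exact hzero

lemma better_sym (w₁ w₂ : ℝ) (hw₂ : w₂ ≠ 0) (hgt : |w₂| < |w₁|)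
    (μ : Measure ℝ) [IsProbabilityMeasure μ]
    (hzero : μ (Set.Iic 0) = 0) :
    wynerRs w₁ w₂ μ < wynerRs w₁ w₂ (symMeas μ) := by
  have hpos := ae_pos_of_Iic_zero μ hzero
  set v₁ := |w₁| with hv₁
  set v₂ := |w₂| with hv₂
  have hv₂pos : 0 < v₂ := abs_pos.2 hw₂
  have hv₁pos : 0 < v₁ := lt_trans hv₂pos hgt
  set p₁ := ∫ x, gaussQ (v₁ * x) ∂μ with hp₁
  set p₂ := ∫ x, gaussQ (v₂ * x) ∂μ with hp₂
  -- p₁ > 0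
  have hp1pos : 0 < p₁ := by
    rw [hp₁, integral_pos_iff_support_of_nonneg_ae
      (Eventually.of_forall fun x => (gaussQ_pos _).le) (intQ μ v₁)]
    have : Function.support (fun x : ℝ => gaussQ (v₁ * x)) = Set.univ := by
      ext x; simp [Function.mem_support, (gaussQ_pos (v₁ * x)).ne']
    rw [this, measure_univ]; norm_num
  -- p₁ < p₂
  have hlt : p₁ < p₂ := by
    have hdiff : 0 < ∫ x, (gaussQ (v₂ * x) - gaussQ (v₁ * x)) ∂μ := by
      have hint2 : Integrable (fun x : ℝ => gaussQ (v₂ * x) - gaussQ (v₁ * x)) μ :=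
        (intQ μ v₂).sub (intQ μ v₁)
      have hnn : ∀ᵐ x ∂μ, 0 ≤ gaussQ (v₂ * x) - gaussQ (v₁ * x) :=
        hpos.mono fun x hx => by
          have : v₂ * x < v₁ * x := by nlinarith
          linarith [gaussQ_strict_anti this]
      rw [integral_pos_iff_support_of_nonneg_ae hnn hint2]
      have hmem : ∀ᵐ x ∂μ, x ∈ Function.support
          (fun x : ℝ => gaussQ (v₂ * x) - gaussQ (v₁ * x)) :=
        hpos.mono fun x hx => by
          have : v₂ * x < v₁ * x := by nlinarith
          have := gaussQ_strict_anti this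
          simp only [Function.mem_support]
          intro h; rw [sub_eq_zero] at h; exact absurd h.symm (ne_of_lt this)
      set s := Function.support (fun x : ℝ => gaussQ (v₂ * x) - gaussQ (v₁ * x)) with hs
      have hcompl : μ sᶜ = 0 := by
        rw [ae_iff] at hmem
        exact hmem
      have : (1:ENNReal) = μ Set.univ := measure_univ.symm
      rw [show (Set.univ : Set ℝ) = s ∪ sᶜ by simp] at this
      have hle := measure_union_le (μ := μ) s sᶜ
      rw [hcompl, add_zero] at hle
      have : (1:ENNReal) ≤ μ s := le_trans this.le hle
      exact lt_of_lt_of_le (by norm_num) this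
    rw [integral_sub (intQ μ v₂) (intQ μ v₁)] at hdiff
    linarith
  -- p₂ ≤ 1/2
  have hple : p₂ ≤ 1/2 := by
    have : ∫ x, gaussQ (v₂ * x) ∂μ ≤ ∫ _x, (1/2 : ℝ) ∂μ := by
      refine integral_mono_ae (intQ μ v₂) (integrable_const _) ?_
      refine hpos.mono fun x hx => ?_
      have h1 : (0:ℝ) < v₂ * x := mul_pos hv₂pos hx
      have := gaussQ_strict_anti h1
      rw [gaussQ_zero] at this
      linarith
    simpa [measure_univ] using this
  have hbe : binEnt p₁ < binEnt p₂ := binEnt_strictMonoOn hp1pos hlt hple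
  -- compute both secrecy rates
  have e1 : wynerRs w₁ w₂ μ =
      (binEnt p₁ - ∫ x, binEnt (gaussQ (v₁ * x)) ∂μ) -
      (binEnt p₂ - ∫ x, binEnt (gaussQ (v₂ * x)) ∂μ) := by
    unfold wynerRs
    rw [← miMeas_abs μ w₁, ← miMeas_abs μ w₂]
    rfl
  have e2 : wynerRs w₁ w₂ (symMeas μ) =
      (binEnt (1/2) - ∫ x, binEnt (gaussQ (v₁ * x)) ∂μ) -
      (binEnt (1/2) - ∫ x, binEnt (gaussQ (v₂ * x)) ∂μ) := by
    unfold wynerRs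
    rw [← miMeas_abs (symMeas μ) w₁, ← miMeas_abs (symMeas μ) w₂,
      miMeas_symMeas, miMeas_symMeas]
  rw [e1, e2]
  linarith

lemma miMeas_map_neg (μ : Measure ℝ) [IsProbabilityMeasure μ] (w : ℝ) :
    miMeas (Measure.map Neg.neg μ) w = miMeas μ w := by
  have h1 : ∫ x, gaussQ (w * x) ∂(Measure.map Neg.neg μ) = ∫ x, gaussQ (-w * x) ∂μ := by
    rw [integral_map measurable_neg.aemeasurable (measQ w).aestronglyMeasurable]
    exact integral_congr_ae (Eventually.of_forall fun x => by
      show gaussQ (w * -x) = gaussQ (-w * x); rw [show w * -x = -w * x by ring])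
  have h2 : ∫ x, binEnt (gaussQ (w * x)) ∂(Measure.map Neg.neg μ) =
      ∫ x, binEnt (gaussQ (-w * x)) ∂μ := by
    have hm : Measurable fun x : ℝ => binEnt (gaussQ (w * x)) :=
      binEnt_continuous.measurable.comp (measQ w)
    rw [integral_map measurable_neg.aemeasurable hm.aestronglyMeasurable]
    exact integral_congr_ae (Eventually.of_forall fun x => by
      show binEnt (gaussQ (w * -x)) = binEnt (gaussQ (-w * x))
      rw [show w * -x = -w * x by ring])
  have hkey := miMeas_neg μ w
  unfold miMeas at hkey ⊢
  rw [h1, h2]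
  exact hkey

lemma wynerRs_map_neg (w₁ w₂ : ℝ) (μ : Measure ℝ) [IsProbabilityMeasure μ] :
    wynerRs w₁ w₂ (Measure.map Neg.neg μ) = wynerRs w₁ w₂ μ := by
  unfold wynerRs
  rw [miMeas_map_neg, miMeas_map_neg]

lemma pow_map_neg (μ : Measure ℝ) [IsProbabilityMeasure μ] :
    ∫ x, x ^ 2 ∂(Measure.map Neg.neg μ) = ∫ x, x ^ 2 ∂μ := by
  have hm : Measurable fun x : ℝ => x ^ 2 := by fun_prop
  rw [integral_map measurable_neg.aemeasurable hm.aestronglyMeasurable]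
  exact integral_congr_ae (Eventually.of_forall fun x => by simp)

lemma int_pow_map_neg (μ : Measure ℝ) [IsProbabilityMeasure μ]
    (hint : Integrable (fun x : ℝ => x ^ 2) μ) :
    Integrable (fun x : ℝ => x ^ 2) (Measure.map Neg.neg μ) := by
  refine (integrable_map_measure (measurable_id.pow_const 2).aestronglyMeasurable
    measurable_neg.aemeasurable).2 ?_
  refine hint.congr (Eventually.of_forall fun x => ?_)
  simp [Function.comp]

/-- Theorem 2, case `|w₁| > |w₂|`: any maximizer `μ*` of the Wyner secrecy rate under
the power constraint `∫ x² dμ ≤ J` assigns positive mass to both `(-∞,0]` and `[0,∞)`,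
i.e. its support is contained neither in `(0,∞)` nor in `(-∞,0)`. -/
theorem optimal_support_gt (w₁ w₂ : ℝ) (hw₁ : w₁ ≠ 0) (hw₂ : w₂ ≠ 0)
    (hgt : |w₂| < |w₁|) (J : ℝ) (hJ : 0 < J)
    (μs : Measure ℝ) [IsProbabilityMeasure μs]
    (hint : Integrable (fun x : ℝ => x ^ 2) μs)
    (hpow : (∫ x, x ^ 2 ∂μs) ≤ J)
    (hopt : ∀ μ : Measure ℝ, IsProbabilityMeasure μ →
      Integrable (fun x : ℝ => x ^ 2) μ → (∫ x, x ^ 2 ∂μ) ≤ J →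
      wynerRs w₁ w₂ μ ≤ wynerRs w₁ w₂ μs) :
    0 < μs (Set.Iic 0) ∧ 0 < μs (Set.Ici 0) := by
  constructor
  · by_contra h
    have hz : μs (Set.Iic 0) = 0 := by
      rw [not_lt, le_zero_iff] at h; exact h
    have hlt := better_sym w₁ w₂ hw₂ hgt μs hz
    have hle := hopt (symMeas μs) inferInstance (symMeas_int_pow μs hint)
      (by rw [symMeas_pow μs hint]; exact hpow)
    linarith
  · by_contra h
    have hz : μs (Set.Ici 0) = 0 := by
      rw [not_lt, le_zero_iff] at h; exact h
    set μ' := Measure.map Neg.neg μs with hμ'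
    haveI : IsProbabilityMeasure μ' := Measure.isProbabilityMeasure_map measurable_neg.aemeasurable
    have hz' : μ' (Set.Iic 0) = 0 := by
      rw [hμ', Measure.map_apply measurable_neg measurableSet_Iic]
      have : Neg.neg ⁻¹' Set.Iic (0:ℝ) = Set.Ici 0 := by
        ext x; simp
      rw [this]; exact hz
    have hint' : Integrable (fun x : ℝ => x ^ 2) μ' := int_pow_map_neg μs hint
    have hlt := better_sym w₁ w₂ hw₂ hgt μ' hz'
    have hRs : wynerRs w₁ w₂ μ' = wynerRs w₁ w₂ μs := wynerRs_map_neg w₁ w₂ μs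
    have hle := hopt (symMeas μ') inferInstance (symMeas_int_pow μ' hint')
      (by rw [symMeas_pow μ' hint', hμ', pow_map_neg]; exact hpow)
    linarith
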